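/- Let T ∈ O(R^{n+1}) with u = T(e_{n+1}) ≠ e_{n+1}, let X = T(Φ_n^-) ∩ Φ_n^+, and let e = -e_{n+1}. Then the topological closure of X equals H_u ∩ H_e ∩ S^n, where H_w = {x : ⟨x,w⟩ ≤ 0}. -/

import Mathlib

open Set

noncomputable section

def IsCone {V : Type*} [AddCommGroup V] [Module ℝ V] (C : Set V) : Prop :=
  (0 : V) ∈ C ∧ ∀ r : ℝ, 0 ≤ r → ∀ v ∈ C, r • v ∈ C

def IsConvexCone {V : Type*} [AddCommGroup V] [Module ℝ V] (C : Set V) : Prop :=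
  IsCone C ∧ ∀ u ∈ C, ∀ v ∈ C, u + v ∈ C

def IsMaxPointedCone {V : Type*} [AddCommGroup V] [Module ℝ V] (D : Set V) : Prop :=
  IsConvexCone D ∧ D ∩ (-D) = {0} ∧ D ∪ (-D) = Set.univ

def hatCone {V : Type*} [AddCommGroup V] [Module ℝ V] (X : Set V) : Set V :=
  {0} ∪ {v | ∃ r : ℝ, 0 ≤ r ∧ ∃ x ∈ X, v = r • x}

def sphereN (n : ℕ) : Set (EuclideanSpace ℝ (Fin (n + 1))) := Metric.sphere 0 1

def PhiPlus (n : ℕ) : Set (EuclideanSpace ℝ (Fin (n + 1))) :=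
  {x | x ∈ sphereN n ∧ ∃ m : Fin (n + 1), 0 < x m ∧ ∀ i, m < i → x i = 0}

def PhiMinus (n : ℕ) : Set (EuclideanSpace ℝ (Fin (n + 1))) := {x | -x ∈ PhiPlus n}

def Ln (n : ℕ) : Set (Set (EuclideanSpace ℝ (Fin (n + 1)))) :=
  {X | ∃ D, IsMaxPointedCone D ∧ X = D ∩ PhiPlus n}

lemma lune_closure {E : Type*} [NormedAddCommGroup E] [InnerProductSpace ℝ E]
    {u w : E} (hu : ‖u‖ = 1) (hw : ‖w‖ = 1) (hne : u ≠ -w)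
    {x : E} (hx1 : (inner ℝ x u : ℝ) ≤ 0) (hx2 : (inner ℝ x w : ℝ) ≤ 0) (hx : ‖x‖ = 1) :
    x ∈ closure {y : E | (inner ℝ y u : ℝ) < 0 ∧ (inner ℝ y w : ℝ) < 0 ∧ ‖y‖ = 1} := by
  have huw : u + w ≠ 0 := fun h => hne (by linear_combination (norm := module) h)
  have hnuw : (0:ℝ) < ‖u + w‖ := norm_pos_iff.mpr huw
  set v : E := -(‖u + w‖⁻¹ • (u + w)) with hv
  have hinner : (inner ℝ u w : ℝ) > -1 := by
    have h2 : ‖u + w‖^2 = 2 + 2 * (inner ℝ u w : ℝ) := by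
      rw [@norm_add_sq_real]; rw [hu, hw]; ring
    nlinarith [sq_nonneg ‖u+w‖, hnuw]
  have hvu : (inner ℝ v u : ℝ) < 0 := by
    rw [hv]
    simp only [inner_neg_left, inner_smul_left, inner_add_left, RCLike.conj_to_real]
    have h1 : (inner ℝ u u : ℝ) = 1 := by rw [real_inner_self_eq_norm_sq, hu]; ring
    have h2 : (inner ℝ w u : ℝ) = inner ℝ u w := real_inner_comm u w
    rw [h1, h2]
    linarith [mul_pos (inv_pos.mpr hnuw) (by linarith : (0:ℝ) < 1 + (inner ℝ u w : ℝ))]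
  have hvw : (inner ℝ v w : ℝ) < 0 := by
    rw [hv]
    simp only [inner_neg_left, inner_smul_left, inner_add_left, RCLike.conj_to_real]
    have : (inner ℝ w w : ℝ) = 1 := by rw [real_inner_self_eq_norm_sq, hw]; ring
    rw [this]
    linarith [mul_pos (inv_pos.mpr hnuw) (by linarith : (0:ℝ) < (inner ℝ u w : ℝ) + 1)]
  have hvn : ‖v‖ = 1 := by
    rw [hv, norm_neg, norm_smul, norm_inv, norm_norm]
    field_simp
  -- the curve
  set f : ℝ → E := fun t => ‖x + t • v‖⁻¹ • (x + t • v) with hf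
  have hne0 : ∀ t ∈ Ioo (0:ℝ) 1, x + t • v ≠ 0 := by
    intro t ht h
    have : ‖x‖ = ‖t • v‖ := by
      have : x = -(t • v) := by linear_combination (norm := module) h
      rw [this, norm_neg]
    rw [hx, norm_smul, hvn, Real.norm_eq_abs, abs_of_pos ht.1] at this
    simp at this; linarith [ht.2]
  have hmem : ∀ t ∈ Ioo (0:ℝ) 1, f t ∈ {y : E | (inner ℝ y u : ℝ) < 0 ∧ (inner ℝ y w : ℝ) < 0 ∧ ‖y‖ = 1} := by
    intro t ht
    have hpos : (0:ℝ) < ‖x + t • v‖ := norm_pos_iff.mpr (hne0 t ht)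
    refine ⟨?_, ?_, ?_⟩
    · rw [hf]
      simp only [inner_smul_left, inner_add_left, RCLike.conj_to_real, real_inner_smul_left]
      have : (inner ℝ x u : ℝ) + t * inner ℝ v u < 0 := by nlinarith [ht.1]
      exact mul_neg_of_pos_of_neg (inv_pos.mpr hpos) this
    · rw [hf]
      simp only [inner_smul_left, inner_add_left, RCLike.conj_to_real, real_inner_smul_left]
      have : (inner ℝ x w : ℝ) + t * inner ℝ v w < 0 := by nlinarith [ht.1]
      exact mul_neg_of_pos_of_neg (inv_pos.mpr hpos) this
    · rw [hf]
      simp only [norm_smul, norm_inv, norm_norm]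
      field_simp
  have htend : Filter.Tendsto f (nhdsWithin 0 (Ioi (0:ℝ))) (nhds x) := by
    have hc : Filter.Tendsto f (nhds (0:ℝ)) (nhds x) := by
      have h1 : Filter.Tendsto (fun t : ℝ => x + t • v) (nhds 0) (nhds x) := by
        have hc : Continuous (fun t : ℝ => x + t • v) := by continuity
        simpa using hc.tendsto 0
      have h2 : Filter.Tendsto (fun t : ℝ => ‖x + t • v‖⁻¹) (nhds 0) (nhds 1) := by
        have := (h1.norm).inv₀ (by rw [hx]; norm_num)
        simpa [hx] using this
      simpa only [one_smul] using h2.smul h1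
    exact hc.mono_left nhdsWithin_le_nhds
  refine mem_closure_of_tendsto htend ?_
  have : Ioo (0:ℝ) 1 ∈ nhdsWithin 0 (Ioi (0:ℝ)) := by
    rw [mem_nhdsWithin]
    exact ⟨Iio 1, isOpen_Iio, by norm_num, fun y hy => ⟨hy.2, hy.1⟩⟩
  filter_upwards [this] with t ht using hmem t ht

lemma inner_single_last (n : ℕ) (x : EuclideanSpace ℝ (Fin (n + 1))) :
    (inner ℝ x (EuclideanSpace.single (Fin.last n) (1 : ℝ)) : ℝ) = x (Fin.last n) := by
  rw [EuclideanSpace.inner_single_right]; simp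

lemma mem_phiPlus_of_last_pos {n : ℕ} {x : EuclideanSpace ℝ (Fin (n + 1))}
    (hx : ‖x‖ = 1) (h : 0 < x (Fin.last n)) : x ∈ PhiPlus n := by
  refine ⟨by simpa [sphereN] using hx, Fin.last n, h, fun i hi => ?_⟩
  exact absurd (Fin.le_last i) (not_le.mpr hi)

lemma phiPlus_last_nonneg {n : ℕ} {x : EuclideanSpace ℝ (Fin (n + 1))}
    (hx : x ∈ PhiPlus n) : 0 ≤ x (Fin.last n) := by
  obtain ⟨-, m, hm, hz⟩ := hx
  rcases eq_or_ne m (Fin.last n) with h | h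
  · rw [← h]; exact hm.le
  · rw [hz (Fin.last n) (lt_of_le_of_ne (Fin.le_last m) h)]

lemma phiPlus_norm {n : ℕ} {x : EuclideanSpace ℝ (Fin (n + 1))}
    (hx : x ∈ PhiPlus n) : ‖x‖ = 1 := by
  have := hx.1
  simpa [sphereN] using this

theorem stmt16 (n : ℕ)
    (T : EuclideanSpace ℝ (Fin (n + 1)) ≃ₗᵢ[ℝ] EuclideanSpace ℝ (Fin (n + 1)))
    (u : EuclideanSpace ℝ (Fin (n + 1)))
    (hu : u = T (EuclideanSpace.single (Fin.last n) (1 : ℝ)))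
    (hne : u ≠ EuclideanSpace.single (Fin.last n) (1 : ℝ))
    (X : Set (EuclideanSpace ℝ (Fin (n + 1))))
    (hX : X = (T '' PhiMinus n) ∩ PhiPlus n) :
    closure X = {x | (inner ℝ x u : ℝ) ≤ 0} ∩
      {x | (inner ℝ x (-(EuclideanSpace.single (Fin.last n) (1 : ℝ))) : ℝ) ≤ 0} ∩
      sphereN n := by
  subst hX
  set e : EuclideanSpace ℝ (Fin (n + 1)) := EuclideanSpace.single (Fin.last n) (1 : ℝ) with he
  have hen : ‖e‖ = 1 := by rw [he]; simp
  have hun : ‖u‖ = 1 := by rw [hu, T.norm_map]; exact hen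
  have hinner_e : ∀ x : EuclideanSpace ℝ (Fin (n + 1)),
      (inner ℝ x e : ℝ) = x (Fin.last n) := fun x => inner_single_last n x
  apply subset_antisymm
  · -- closure X ⊆ RHS
    apply closure_minimal
    · rintro x ⟨⟨y, hy, rfl⟩, hxp⟩
      refine ⟨⟨?_, ?_⟩, ?_⟩
      · show (inner ℝ (T y) u : ℝ) ≤ 0
        rw [hu, T.inner_map_map, hinner_e]
        have := phiPlus_last_nonneg hy
        have hy' : (-y) (Fin.last n) = -(y (Fin.last n)) := rfl
        rw [hy'] at this
        linarith
      · show (inner ℝ (T y) (-e) : ℝ) ≤ 0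
        rw [inner_neg_right, hinner_e]
        linarith [phiPlus_last_nonneg hxp]
      · simpa [sphereN] using phiPlus_norm hxp
    · refine IsClosed.inter (IsClosed.inter ?_ ?_) Metric.isClosed_sphere
      · exact isClosed_le (Continuous.inner continuous_id continuous_const) continuous_const
      · exact isClosed_le (Continuous.inner continuous_id continuous_const) continuous_const
  · -- RHS ⊆ closure X
    rintro x ⟨⟨h1, h2⟩, h3⟩
    have h2' : (inner ℝ x (-e) : ℝ) ≤ 0 := h2
    have h3' : ‖x‖ = 1 := by simpa [sphereN] using h3
    have hlune := lune_closure hun (by rw [norm_neg]; exact hen)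
      (by rw [neg_neg]; exact hne) h1 h2' h3'
    refine closure_mono ?_ hlune
    rintro y ⟨hy1, hy2, hy3⟩
    have hylast : 0 < y (Fin.last n) := by
      rw [inner_neg_right, hinner_e] at hy2; linarith
    refine ⟨⟨T.symm y, ?_, T.apply_symm_apply y⟩, mem_phiPlus_of_last_pos hy3 hylast⟩
    show -(T.symm y) ∈ PhiPlus n
    apply mem_phiPlus_of_last_pos
    · rw [norm_neg, T.symm.norm_map]; exact hy3
    · have : (inner ℝ (T.symm y) e : ℝ) = inner ℝ y u := by
        rw [hu, ← T.inner_map_map (T.symm y) e, T.apply_symm_apply]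
      have hlt : (T.symm y) (Fin.last n) < 0 := by
        have h4 := hinner_e (T.symm y)
        rw [← h4, this]; exact hy1
      show 0 < -((T.symm y) (Fin.last n))
      linarith
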